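/- Let E be a real Banach space, P a topological space, T ⊆ ℝ an interval, t0 ∈ T, x0 ∈ E, p0 ∈ P, and X : ℝ × E × P → E. Suppose there exist r > 0, α > 0, λ ∈ (0,1), an open neighbourhood O of p0, and integrable functions h, ℓ : ℝ → ℝ on I := T ∩ [t0 − α, t0 + α] such that, with B := closedBall x0 (2r): (i) for every x ∈ B and p ∈ O, s ↦ X(s, x, p) is measurable on I; (ii) for every s ∈ I and p ∈ O, y ↦ X(s, y, p) is continuous on B; (iii) ‖X(s, y, p)‖ ≤ h(s) for all s ∈ I, y ∈ B, p ∈ O, and ∫_I h(s) ds < r; (iv) ‖X(s, x1, p) − X(s, x2, p)‖ ≤ ℓ(s) ‖x1 − x2‖ for all s ∈ I, x1, x2 ∈ B, p ∈ O, and ∫_I ℓ(s) ds ≤ λ. Assume additionally: (v) for every p1 ∈ O, every continuous curve γ : I → B, and every ε > 0 there is a neighbourhood O' ⊆ O of p1 with ∫_I ‖X(s, γ(s), p) − X(s, γ(s), p1)‖ ds < ε for all p ∈ O'. For x ∈ closedBall x0 r and p ∈ O let Φ(·, x, p) : I → E be the unique continuous curve with ‖Φ(t, x, p) − x‖ ≤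 r on I and Φ(t, x, p) = x + ∫_{t0}^{t} X(s, Φ(s, x, p), p) ds. Then the map (t, x, p) ↦ Φ(t, x, p) is continuous on I × closedBall x0 r × O. -/

import Mathlib

open Set MeasureTheory intervalIntegral

open Filter Topology in
/-- Carathéodory-type measurability: composing a function measurable in time and
continuous in space with a continuous curve gives a measurable function of time. -/
private lemma curve_aestronglyMeasurable
    {E F : Type*} [NormedAddCommGroup E] [NormedAddCommGroup F]
    (I : Set ℝ) (hImeas : MeasurableSet I) (B : Set E)
    (X : ℝ → E → F)
    (hmeas : ∀ x ∈ B, AEStronglyMeasurable (fun s => X s x) (volume.restrict I))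
    (hcont : ∀ s ∈ I, ContinuousOn (fun y => X s y) B)
    (γ : ℝ → E) (hγ : ContinuousOn γ I) (hγB : ∀ s ∈ I, γ s ∈ B) :
    AEStronglyMeasurable (fun s => X s (γ s)) (volume.restrict I) := by
  classical
  rcases I.eq_empty_or_nonempty with hIe | hIne
  · simp [hIe]
  -- countable subset of I dense in I
  obtain ⟨D₀, hD₀c, hD₀d⟩ := TopologicalSpace.exists_countable_dense (↥I)
  set D : Set ℝ := Subtype.val '' D₀ with hD
  have hDsub : D ⊆ I := by rintro _ ⟨⟨x, hx⟩, _, rfl⟩; exact hx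
  have hDcnt : D.Countable := hD₀c.image _
  have hDdense : ∀ s ∈ I, s ∈ closure D := by
    intro s hs
    exact mem_closure_image (continuous_subtype_val.continuousAt) (hD₀d ⟨s, hs⟩)
  have hDne : D.Nonempty := by
    rcases hIne with ⟨s, hs⟩
    by_contra hno
    rw [Set.not_nonempty_iff_eq_empty] at hno
    simpa [hno] using hDdense s hs
  obtain ⟨e, he⟩ := Set.Countable.exists_eq_range hDcnt hDne
  have heI : ∀ k, e k ∈ I := fun k => hDsub (he ▸ Set.mem_range_self k)
  set c : ℕ → ℝ := fun n => 1 / ((n : ℝ) + 1) with hc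
  have hcpos : ∀ n, 0 < c n := fun n => by positivity
  -- approximation existence
  have hex : ∀ (n : ℕ), ∀ s ∈ I, ∃ k, dist (γ s) (γ (e k)) < c n := by
    intro n s hs
    have h2 : ContinuousWithinAt γ D s := (hγ s hs).mono hDsub
    have hsc : γ s ∈ closure (γ '' D) := h2.mem_closure_image (hDdense s hs)
    rw [Metric.mem_closure_iff] at hsc
    obtain ⟨y, hy, hyd⟩ := hsc (c n) (hcpos n)
    obtain ⟨u, hu, rfl⟩ := hy
    rw [he] at hu
    obtain ⟨k, rfl⟩ := hu
    exact ⟨k, hyd⟩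
  set kn : ℕ → ℝ → ℕ := fun n s =>
    if hh : ∃ k, dist (γ s) (γ (e k)) < c n then Nat.find hh else 0 with hkn
  set g : ℕ → ℝ → F := fun n s => X s (γ (e (kn n s))) with hg
  have hknspec : ∀ (n : ℕ), ∀ s ∈ I, dist (γ s) (γ (e (kn n s))) < c n ∧
      ∀ j < kn n s, ¬ dist (γ s) (γ (e j)) < c n := by
    intro n s hs
    have hh := hex n s hs
    simp only [hkn, dif_pos hh]
    exact ⟨Nat.find_spec hh, fun j hj => Nat.find_min hh hj⟩
  -- measurable pieces
  have hP : ∀ (k : ℕ) (ρ : ℝ), MeasurableSet {s ∈ I | dist (γ s) (γ (e k)) < ρ} := by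
    intro k ρ
    have hcd : ContinuousOn (fun s => dist (γ s) (γ (e k))) I := (continuous_id.dist continuous_const).comp_continuousOn hγ
    obtain ⟨u, hu, huEq⟩ := (continuousOn_iff'.mp hcd) (Iio ρ) isOpen_Iio
    have hset : {s ∈ I | dist (γ s) (γ (e k)) < ρ} = u ∩ I := by
      rw [← huEq]; ext s; simp only [mem_setOf_eq, mem_inter_iff, mem_preimage, mem_Iio]
      exact ⟨fun ⟨a, b⟩ => ⟨b, a⟩, fun ⟨a, b⟩ => ⟨b, a⟩⟩
    rw [hset]; exact hu.measurableSet.inter hImeas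
  set A : ℕ → ℕ → Set ℝ := fun n k => {s ∈ I | kn n s = k} with hA
  have hAsub : ∀ n k, A n k ⊆ I := fun n k s hs => hs.1
  have hAmeas : ∀ n k, MeasurableSet (A n k) := by
    intro n k
    have hset : A n k = {s ∈ I | dist (γ s) (γ (e k)) < c n} ∩
        ⋂ j ∈ Finset.range k, (I \ {s ∈ I | dist (γ s) (γ (e j)) < c n}) := by
      ext s
      simp only [hA, mem_setOf_eq, mem_inter_iff, mem_iInter, Finset.mem_range, mem_diff]
      constructor
      · rintro ⟨hs, hk⟩
        obtain ⟨h1, h2⟩ := hknspec n s hs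
        rw [hk] at h1 h2
        exact ⟨⟨hs, h1⟩, fun j hj => ⟨hs, fun hcon => h2 j hj hcon.2⟩⟩
      · rintro ⟨⟨hs, h1⟩, h2⟩
        refine ⟨hs, ?_⟩
        have hh : ∃ k, dist (γ s) (γ (e k)) < c n := ⟨k, h1⟩
        simp only [hkn, dif_pos hh]
        rw [Nat.find_eq_iff]
        exact ⟨h1, fun j hj hcon => (h2 j hj).2 ⟨hs, hcon⟩⟩
    rw [hset]
    refine (hP k (c n)).inter (MeasurableSet.biInter (Set.to_countable _)
      fun j _ => hImeas.diff (hP j (c n)))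
  have hIA : ∀ n, I = ⋃ k, A n k := by
    intro n; apply Set.Subset.antisymm
    · intro s hs; exact Set.mem_iUnion.2 ⟨kn n s, hs, rfl⟩
    · intro s hs; obtain ⟨k, hk, _⟩ := Set.mem_iUnion.1 hs; exact hk
  have hgmeas : ∀ n, AEStronglyMeasurable (g n) (volume.restrict I) := by
    intro n
    rw [hIA n]
    rw [aestronglyMeasurable_iUnion_iff]
    intro k
    refine ((hmeas (γ (e k)) (hγB _ (heI k))).mono_measure
      (Measure.restrict_mono (hAsub n k) le_rfl)).congr ?_
    refine ae_restrict_of_forall_mem (hAmeas n k) ?_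
    rintro s ⟨_, hk⟩
    simp only [hg, hk]
  have hlim : ∀ s ∈ I, Tendsto (fun n => g n s) atTop (𝓝 (X s (γ s))) := by
    intro s hs
    have hyB : ∀ n : ℕ, γ (e (kn n s)) ∈ B := fun n => hγB _ (heI _)
    have hyd : Tendsto (fun n => γ (e (kn n s))) atTop (𝓝[B] (γ s)) := by
      apply tendsto_nhdsWithin_of_tendsto_nhds_of_eventually_within
      · rw [tendsto_iff_dist_tendsto_zero]
        apply squeeze_zero (fun n => dist_nonneg) (fun n => ?_)
        · exact tendsto_one_div_add_atTop_nhds_zero_nat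
        · rw [dist_comm]; exact ((hknspec n s hs).1).le
      · exact Filter.Eventually.of_forall hyB
    exact ((hcont s hs (γ s) (hγB s hs)).tendsto).comp hyd
  exact aestronglyMeasurable_of_tendsto_ae atTop hgmeas
    (ae_restrict_of_forall_mem hImeas hlim)

/-- Part (ii) of the paper's Lemma 3.6 / Lemma 3.7 in the Banach-space local model:
joint continuity of the local flow in time, initial state, and parameter, under the
additional continuity-in-parameter hypothesis (v). -/
theorem local_flow_jointly_continuous
    {E P : Type*} [NormedAddCommGroup E] [NormedSpace ℝ E] [CompleteSpace E]
    [TopologicalSpace P]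
    (T : Set ℝ) (hT : T.OrdConnected) (t0 : ℝ) (ht0 : t0 ∈ T)
    (x0 : E) (p0 : P) (X : ℝ → E → P → E)
    (r α lam : ℝ) (hr : 0 < r) (hα : 0 < α) (hlam0 : 0 < lam) (hlam1 : lam < 1)
    (O : Set P) (hO : IsOpen O) (hp0 : p0 ∈ O)
    (I : Set ℝ) (B : Set E)
    (hI : I = T ∩ Icc (t0 - α) (t0 + α)) (hB : B = Metric.closedBall x0 (2 * r))
    (h ℓ : ℝ → ℝ) (hhint : IntegrableOn h I) (hℓint : IntegrableOn ℓ I)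
    (hXmeas : ∀ x ∈ B, ∀ p ∈ O,
      AEStronglyMeasurable (fun s => X s x p) (volume.restrict I))
    (hXcont : ∀ s ∈ I, ∀ p ∈ O, ContinuousOn (fun y => X s y p) B)
    (hXbd : ∀ s ∈ I, ∀ y ∈ B, ∀ p ∈ O, ‖X s y p‖ ≤ h s)
    (hhsmall : ∫ s in I, h s < r)
    (hXlip : ∀ s ∈ I, ∀ x1 ∈ B, ∀ x2 ∈ B, ∀ p ∈ O,
      ‖X s x1 p - X s x2 p‖ ≤ ℓ s * ‖x1 - x2‖)
    (hℓsmall : ∫ s in I, ℓ s ≤ lam)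
    (hXparam : ∀ p1 ∈ O, ∀ γ : ℝ → E, ContinuousOn γ I → (∀ s ∈ I, γ s ∈ B) →
      ∀ ε > (0 : ℝ), ∃ O' : Set P, IsOpen O' ∧ p1 ∈ O' ∧ O' ⊆ O ∧
        ∀ p ∈ O', ∫ s in I, ‖X s (γ s) p - X s (γ s) p1‖ < ε)
    (Φ : ℝ → E → P → E)
    (hΦ : ∀ x ∈ Metric.closedBall x0 r, ∀ p ∈ O,
      ContinuousOn (fun t => Φ t x p) I ∧ (∀ t ∈ I, ‖Φ t x p - x‖ ≤ r) ∧
      IntegrableOn (fun s => X s (Φ s x p) p) I ∧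
      ∀ t ∈ I, Φ t x p = x + ∫ s in t0..t, X s (Φ s x p) p) :
    ContinuousOn (fun q : ℝ × E × P => Φ q.1 q.2.1 q.2.2)
      (I ×ˢ Metric.closedBall x0 r ×ˢ O) := by
  classical
  rcases subsingleton_or_nontrivial E with hE | hE
  · have hconst : (fun q : ℝ × E × P => Φ q.1 q.2.1 q.2.2) = fun _ => Φ t0 x0 p0 :=
      funext fun q => Subsingleton.elim _ _
    rw [hconst]; exact continuousOn_const
  have hImeas : MeasurableSet I := by
    rw [hI]; exact hT.measurableSet.inter measurableSet_Icc
  have hIord : I.OrdConnected := by rw [hI]; exact hT.inter Set.ordConnected_Icc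
  have ht0I : t0 ∈ I := by
    rw [hI]; exact ⟨ht0, by constructor <;> linarith⟩
  have hlamlt : 0 < 1 - lam := by linarith
  -- ℓ is nonnegative on I
  have hℓ0 : ∀ s ∈ I, 0 ≤ ℓ s := by
    intro s hs
    obtain ⟨v, hv0⟩ := exists_ne (0 : E)
    have hvn : (0 : ℝ) < ‖v‖ := norm_pos_iff.mpr hv0
    set y₁ : E := x0 + (2 * r / ‖v‖) • v with hy₁
    have hy₁n : ‖x0 - y₁‖ = 2 * r := by
      rw [hy₁]
      have : x0 - (x0 + (2 * r / ‖v‖) • v) = -((2 * r / ‖v‖) • v) := by abel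
      rw [this, norm_neg, norm_smul, Real.norm_eq_abs, abs_div, abs_of_pos (by positivity),
        abs_of_pos hvn]
      field_simp
    have hx0B : x0 ∈ B := by
      rw [hB]; simp [Metric.mem_closedBall]; positivity
    have hy₁B : y₁ ∈ B := by
      rw [hB, Metric.mem_closedBall, dist_eq_norm]
      rw [← norm_neg, neg_sub, hy₁n]
    have hlip := hXlip s hs x0 hx0B y₁ hy₁B p0 hp0
    rw [hy₁n] at hlip
    nlinarith [norm_nonneg (X s x0 p0 - X s y₁ p0)]
  -- membership in the big ball
  have hmemB : ∀ x ∈ Metric.closedBall x0 r, ∀ p ∈ O, ∀ s ∈ I, Φ s x p ∈ B := by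
    intro x hx p hp s hs
    have h1 := (hΦ x hx p hp).2.1 s hs
    have h2 : ‖x - x0‖ ≤ r := by rwa [Metric.mem_closedBall, dist_eq_norm] at hx
    rw [hB, Metric.mem_closedBall, dist_eq_norm]
    calc ‖Φ s x p - x0‖ = ‖(Φ s x p - x) + (x - x0)‖ := by abel_nf
      _ ≤ ‖Φ s x p - x‖ + ‖x - x0‖ := norm_add_le _ _
      _ ≤ r + r := add_le_add h1 h2
      _ = 2 * r := by ring
  -- interval integrability on subintervals
  have huIcc : ∀ t ∈ I, Set.uIcc t0 t ⊆ I := fun t ht => hIord.uIcc_subset ht0I ht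
  have hII : ∀ (f : ℝ → E), IntegrableOn f I → ∀ t ∈ I,
      IntervalIntegrable f volume t0 t := by
    intro f hf t ht
    exact (hf.mono_set (huIcc t ht)).intervalIntegrable
  have hnorm_int : ∀ (f : ℝ → E), IntegrableOn f I → ∀ t ∈ I,
      ‖∫ s in t0..t, f s‖ ≤ ∫ s in I, ‖f s‖ := by
    intro f hf t ht
    calc ‖∫ s in t0..t, f s‖ ≤ ∫ s in Set.uIoc t0 t, ‖f s‖ :=
          intervalIntegral.norm_integral_le_integral_norm_uIoc
      _ ≤ ∫ s in I, ‖f s‖ := by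
          apply setIntegral_mono_set hf.norm
          · exact Filter.Eventually.of_forall fun s => norm_nonneg _
          · exact HasSubset.Subset.eventuallyLE (Set.uIoc_subset_uIcc.trans (huIcc t ht))
  -- main continuity argument
  rintro ⟨t1, x1, p1⟩ hq1
  obtain ⟨ht1, hx1, hp1⟩ : t1 ∈ I ∧ x1 ∈ Metric.closedBall x0 r ∧ p1 ∈ O := by
    simpa [Set.mem_prod] using hq1
  apply Metric.tendsto_nhds.mpr
  intro ε hε
  set ε' : ℝ := (1 - lam) * ε / 8 with hε'
  have hε'pos : 0 < ε' := by positivity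
  obtain ⟨hγcont, hγbd, hγint, hγeq⟩ := hΦ x1 hx1 p1 hp1
  have hγB : ∀ s ∈ I, Φ s x1 p1 ∈ B := hmemB x1 hx1 p1 hp1
  obtain ⟨O', hO'open, hp1O', hO'sub, hO'param⟩ :=
    hXparam p1 hp1 (fun s => Φ s x1 p1) hγcont hγB ε' hε'pos
  -- time continuity neighborhood
  have htc : {t : ℝ | dist (Φ t x1 p1) (Φ t1 x1 p1) < ε / 2} ∈ nhdsWithin t1 I := by
    have := hγcont t1 ht1 (Metric.ball_mem_nhds (Φ t1 x1 p1) (half_pos hε))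
    simpa [Metric.ball, Set.preimage] using this
  obtain ⟨U, hUopen, ht1U, hUsub⟩ := mem_nhdsWithin.mp htc
  -- the key uniform estimate
  have key : ∀ x ∈ Metric.closedBall x0 r, ‖x - x1‖ < ε' → ∀ p ∈ O', ∀ t ∈ I,
      ‖Φ t x p - Φ t x1 p1‖ ≤ ε / 2 := by
    intro x hx hxd p hpO'
    have hpO : p ∈ O := hO'sub hpO'
    obtain ⟨hcont_xp, hbd_xp, hint_xp, heq_xp⟩ := hΦ x hx p hpO
    set d : ℝ → ℝ := fun t => ‖Φ t x p - Φ t x1 p1‖ with hd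
    have hbdd : BddAbove (d '' I) := by
      refine ⟨r + ‖x - x1‖ + r, ?_⟩
      rintro _ ⟨t, ht, rfl⟩
      calc d t = ‖(Φ t x p - x) + (x - x1) + (x1 - Φ t x1 p1)‖ := by
            simp only [hd]; congr 1; abel
        _ ≤ ‖Φ t x p - x‖ + ‖x - x1‖ + ‖x1 - Φ t x1 p1‖ := norm_add₃_le
        _ ≤ r + ‖x - x1‖ + r := by
            refine add_le_add (add_le_add (hbd_xp t ht) le_rfl) ?_
            rw [norm_sub_rev]; exact hγbd t ht
    have hne : (d '' I).Nonempty := ⟨d t0, t0, ht0I, rfl⟩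
    set S : ℝ := sSup (d '' I) with hS
    have hdS : ∀ t ∈ I, d t ≤ S := fun t ht => le_csSup hbdd ⟨t, ht, rfl⟩
    have hS0 : 0 ≤ S := le_trans (norm_nonneg _) (hdS t0 ht0I)
    -- the parameter-error function
    set ψ : ℝ → ℝ := fun s => ‖X s (Φ s x1 p1) p - X s (Φ s x1 p1) p1‖ with hψ
    have hψmeas : AEStronglyMeasurable (fun s => X s (Φ s x1 p1) p)
        (volume.restrict I) := by
      refine curve_aestronglyMeasurable I hImeas B (fun s y => X s y p)
        (fun y hy => hXmeas y hy p hpO) (fun s hs => hXcont s hs p hpO)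
        (fun s => Φ s x1 p1) hγcont hγB
    have hψint : IntegrableOn ψ I := by
      refine Integrable.mono' (hhint.add hhint) ((hψmeas.sub hγint.1).norm) ?_
      refine ae_restrict_of_forall_mem hImeas ?_
      intro s hs
      simp only [hψ, Real.norm_eq_abs, abs_norm]
      calc ‖X s (Φ s x1 p1) p - X s (Φ s x1 p1) p1‖
          ≤ ‖X s (Φ s x1 p1) p‖ + ‖X s (Φ s x1 p1) p1‖ := norm_sub_le _ _
        _ ≤ h s + h s := add_le_add (hXbd s hs _ (hγB s hs) p hpO)
            (hXbd s hs _ (hγB s hs) p1 hp1)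
    have hψε : ∫ s in I, ψ s < ε' := hO'param p hpO'
    -- pointwise bound on d
    have hkey : ∀ t ∈ I, d t ≤ ‖x - x1‖ + (lam * S + ε') := by
      intro t ht
      have heqt : Φ t x p - Φ t x1 p1 = (x - x1) +
          ∫ s in t0..t, (X s (Φ s x p) p - X s (Φ s x1 p1) p1) := by
        rw [intervalIntegral.integral_sub (hII _ hint_xp t ht) (hII _ hγint t ht),
          heq_xp t ht, hγeq t ht]
        abel
      have hsubint : IntegrableOn
          (fun s => X s (Φ s x p) p - X s (Φ s x1 p1) p1) I := hint_xp.sub hγint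
      calc d t = ‖(x - x1) + ∫ s in t0..t, (X s (Φ s x p) p - X s (Φ s x1 p1) p1)‖ := by
            rw [hd]; simp only; rw [heqt]
        _ ≤ ‖x - x1‖ + ‖∫ s in t0..t, (X s (Φ s x p) p - X s (Φ s x1 p1) p1)‖ :=
            norm_add_le _ _
        _ ≤ ‖x - x1‖ + ∫ s in I, ‖X s (Φ s x p) p - X s (Φ s x1 p1) p1‖ := by
            exact add_le_add le_rfl (hnorm_int _ hsubint t ht)
        _ ≤ ‖x - x1‖ + ∫ s in I, (ℓ s * S + ψ s) := by
            refine add_le_add le_rfl ?_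
            refine setIntegral_mono_on hsubint.norm
              ((hℓint.mul_const S).add hψint) hImeas ?_
            intro s hs
            calc ‖X s (Φ s x p) p - X s (Φ s x1 p1) p1‖
                ≤ ‖X s (Φ s x p) p - X s (Φ s x1 p1) p‖ +
                  ‖X s (Φ s x1 p1) p - X s (Φ s x1 p1) p1‖ := by
                  have hsplit : X s (Φ s x p) p - X s (Φ s x1 p1) p1 =
                      (X s (Φ s x p) p - X s (Φ s x1 p1) p) +
                      (X s (Φ s x1 p1) p - X s (Φ s x1 p1) p1) := by abel
                  rw [hsplit]; exact norm_add_le _ _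
              _ ≤ ℓ s * S + ψ s := by
                  refine add_le_add ?_ le_rfl
                  calc ‖X s (Φ s x p) p - X s (Φ s x1 p1) p‖
                      ≤ ℓ s * ‖Φ s x p - Φ s x1 p1‖ :=
                        hXlip s hs _ (hmemB x hx p hpO s hs) _ (hγB s hs) p hpO
                    _ ≤ ℓ s * S := mul_le_mul_of_nonneg_left (hdS s hs) (hℓ0 s hs)
        _ ≤ ‖x - x1‖ + (lam * S + ε') := by
            refine add_le_add le_rfl ?_
            rw [integral_add (hℓint.mul_const S) hψint]
            refine add_le_add ?_ hψε.le
            rw [MeasureTheory.integral_mul_const]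
            exact mul_le_mul_of_nonneg_right hℓsmall hS0
    have hSle : S ≤ ‖x - x1‖ + (lam * S + ε') :=
      csSup_le hne (by rintro _ ⟨t, ht, rfl⟩; exact hkey t ht)
    have hSbound : S ≤ (‖x - x1‖ + ε') / (1 - lam) := by
      rw [le_div_iff₀ hlamlt]; nlinarith
    intro t ht
    refine (hdS t ht).trans (hSbound.trans ?_)
    rw [div_le_iff₀ hlamlt]
    have : ‖x - x1‖ < ε' := hxd
    rw [hε'] at this ⊢
    nlinarith
  -- assemble the neighborhood
  rw [Filter.eventually_iff_exists_mem]
  refine ⟨(U ×ˢ Metric.ball x1 ε' ×ˢ O') ∩ (I ×ˢ Metric.closedBall x0 r ×ˢ O), ?_, ?_⟩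
  · apply Filter.inter_mem
    · refine mem_nhdsWithin_of_mem_nhds (IsOpen.mem_nhds ?_ ?_)
      · exact hUopen.prod ((Metric.isOpen_ball).prod hO'open)
      · exact ⟨ht1U, Metric.mem_ball_self hε'pos, hp1O'⟩
    · exact self_mem_nhdsWithin
  · rintro ⟨t, x, p⟩ ⟨⟨htU, hxball, hpO'⟩, ⟨htI, hxr, hpO⟩⟩
    simp only at htU hxball hpO' htI hxr hpO ⊢
    have h1 : ‖Φ t x p - Φ t x1 p1‖ ≤ ε / 2 := by
      refine key x hxr ?_ p hpO' t htI
      rwa [← dist_eq_norm]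
    have h2 : dist (Φ t x1 p1) (Φ t1 x1 p1) < ε / 2 := hUsub ⟨htU, htI⟩
    calc dist (Φ t x p) (Φ t1 x1 p1)
        ≤ dist (Φ t x p) (Φ t x1 p1) + dist (Φ t x1 p1) (Φ t1 x1 p1) := dist_triangle _ _ _
      _ < ε / 2 + ε / 2 := by
          rw [dist_eq_norm]
          exact add_lt_add_of_le_of_lt h1 h2
      _ = ε := by ring
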